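/- Let Q be a group, Ω a set, and ω : Ω → Q a function. Let F(ω) be the group presented with generating set Ω × Q and relators (m,q)⁻¹(n,p)⁻¹(m,q)(n, p q⁻¹(ω m)q) for all m, n ∈ Ω and p, q ∈ Q. Then: the assignment (m,q)^p = (m, qp) on generators extends to a well-defined action of Q on F(ω) by group automorphisms; the assignment ∂(m,q) = q⁻¹(ω m)q on generators extends to a group homomorphism ∂ : F(ω) → Q; (∂ : F(ω) → Q) with this action is a crossed module; and it is the free crossed Q-module on ω: for every crossed module (ν : N → Q) and every function f : Ω → N with ν(f(m)) = ω(m) for all m ∈ Ω, there is a unique group homomorphism φ : F(ω) → N satisfying ν ∘ φ = ∂, φ(x^q) = (φ x)^q for all x ∈ F(ω) and q ∈ Q, and φ(m, 1) = f(m) for all m ∈ Ω. -/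

import Mathlib

universe u

/-- A crossed module `(μ : M → P)`: groups `M`, `P`, a (right) action of `P` on `M` by
group automorphisms, written `act m p` for `m ^ p`, and a homomorphism `μ : M →* P`
satisfying CM1: `μ (m ^ p) = p⁻¹ * μ m * p` and CM2: `n ^ (μ m) = m⁻¹ * n * m`. -/
structure CrossedModule (M P : Type u) [Group M] [Group P] where
  μ : M →* P
  act : M → P → M
  act_mul : ∀ m n p, act (m * n) p = act m p * act n p
  act_one : ∀ m, act m 1 = m
  act_act : ∀ m p q, act (act m p) q = act m (p * q)
  cm1 : ∀ m p, μ (act m p) = p⁻¹ * μ m * p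
  cm2 : ∀ m n, act n (μ m) = m⁻¹ * n * m

/-- Let `Q` be a group, `Ω` a set, `ω : Ω → Q`, and let `F(ω)` be the group presented with
generating set `Ω × Q` and relators `(m,q)⁻¹ (n,p)⁻¹ (m,q) (n, p q⁻¹ (ω m) q)` for
`m, n ∈ Ω`, `p, q ∈ Q`.  Then `(m,q) ^ p = (m, q p)` extends to a well-defined action of `Q`
on `F(ω)` by automorphisms, `∂ (m,q) = q⁻¹ (ω m) q` extends to a homomorphism
`∂ : F(ω) → Q`, the result is a crossed module, and it is the free crossed `Q`-module on
`ω`: for every crossed module `(ν : N → Q)` and function `f : Ω → N` with `ν (f m) = ω m`,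
there is a unique homomorphism `φ : F(ω) → N` with `ν ∘ φ = ∂`, `φ (x ^ q) = (φ x) ^ q`,
and `φ (m, 1) = f m`. -/
theorem free_crossed_module {Ω Q : Type u} [Group Q] (ω : Ω → Q)
    (R : Set (FreeGroup (Ω × Q)))
    (hR : R = {r | ∃ (m n : Ω) (p q : Q),
      r = (FreeGroup.of (m, q))⁻¹ * (FreeGroup.of (n, p))⁻¹ * FreeGroup.of (m, q) *
          FreeGroup.of (n, p * q⁻¹ * ω m * q)}) :
    ∃ X : CrossedModule (PresentedGroup R) Q,
      (∀ (m : Ω) (q p : Q), X.act (PresentedGroup.of (m, q)) p = PresentedGroup.of (m, q * p)) ∧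
      (∀ (m : Ω) (q : Q), X.μ (PresentedGroup.of (m, q)) = q⁻¹ * ω m * q) ∧
      ∀ (N : Type u) [Group N] (Z : CrossedModule N Q) (f : Ω → N),
        (∀ m, Z.μ (f m) = ω m) →
        ∃! φ : PresentedGroup R →* N,
          (∀ x, Z.μ (φ x) = X.μ x) ∧
          (∀ x q, φ (X.act x q) = Z.act (φ x) q) ∧
          ∀ m : Ω, φ (PresentedGroup.of (m, 1)) = f m := by
  classical
  have hofmk : ∀ x : Ω × Q, PresentedGroup.mk R (FreeGroup.of x) = PresentedGroup.of x :=
    fun _ => rfl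
  -- the key relator identity in the presented group
  have key : ∀ (m n : Ω) (p q : Q),
      (PresentedGroup.of (n, p * q⁻¹ * ω m * q) : PresentedGroup R) =
        (PresentedGroup.of (m, q))⁻¹ * PresentedGroup.of (n, p) * PresentedGroup.of (m, q) := by
    intro m n p q
    have hmem : ((FreeGroup.of (m, q))⁻¹ * (FreeGroup.of (n, p))⁻¹ * FreeGroup.of (m, q) *
        FreeGroup.of (n, p * q⁻¹ * ω m * q)) ∈ Subgroup.normalClosure R :=
      Subgroup.subset_normalClosure (by rw [hR]; exact ⟨m, n, p, q, rfl⟩)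
    have h1 : PresentedGroup.mk R ((FreeGroup.of (m, q))⁻¹ * (FreeGroup.of (n, p))⁻¹ *
        FreeGroup.of (m, q) * FreeGroup.of (n, p * q⁻¹ * ω m * q)) = 1 :=
      (QuotientGroup.eq_one_iff _).2 hmem
    simp only [map_mul, map_inv, hofmk] at h1
    rw [mul_eq_one_iff_inv_eq] at h1
    rw [← h1]
    group
  -- the boundary homomorphism ∂
  have hμ : ∀ r ∈ R, FreeGroup.lift (fun x : Ω × Q => x.2⁻¹ * ω x.1 * x.2) r = 1 := by
    intro r hr
    rw [hR] at hr
    obtain ⟨m, n, p, q, rfl⟩ := hr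
    simp only [map_mul, map_inv, FreeGroup.lift_apply_of]
    group
  set μhom : PresentedGroup R →* Q := PresentedGroup.toGroup hμ with hμhom
  have μof : ∀ (m : Ω) (q : Q), μhom (PresentedGroup.of (m, q)) = q⁻¹ * ω m * q := by
    intro m q; exact PresentedGroup.toGroup.of hμ
  -- the action homomorphisms
  have hact : ∀ p : Q, ∀ r ∈ R,
      FreeGroup.lift (fun x : Ω × Q => (PresentedGroup.of (x.1, x.2 * p) : PresentedGroup R)) r
        = 1 := by
    intro p r hr
    rw [hR] at hr
    obtain ⟨m, n, p₀, q, rfl⟩ := hr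
    simp only [map_mul, map_inv, FreeGroup.lift_apply_of]
    have h2 : p₀ * q⁻¹ * ω m * q * p = (p₀ * p) * (q * p)⁻¹ * ω m * (q * p) := by group
    rw [h2, key m n (p₀ * p) (q * p)]
    group
  set A : Q → (PresentedGroup R →* PresentedGroup R) := fun p => PresentedGroup.toGroup (hact p)
    with hA
  have Aof : ∀ (p : Q) (m : Ω) (q : Q),
      A p (PresentedGroup.of (m, q)) = PresentedGroup.of (m, q * p) := by
    intro p m q; exact PresentedGroup.toGroup.of (hact p)
  have Aone : ∀ x, A 1 x = x := by
    have : A 1 = MonoidHom.id (PresentedGroup R) := by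
      ext x
      obtain ⟨m, q⟩ := x
      simp [Aof]
    intro x; rw [this]; rfl
  have Aact : ∀ x p q, A q (A p x) = A (p * q) x := by
    intro x p q
    have : (A q).comp (A p) = A (p * q) := by
      ext y
      obtain ⟨m, s⟩ := y
      simp [Aof, mul_assoc]
    calc A q (A p x) = ((A q).comp (A p)) x := rfl
      _ = A (p * q) x := by rw [this]
  have hcm1 : ∀ x p, μhom (A p x) = p⁻¹ * μhom x * p := by
    intro x p
    have : μhom.comp (A p) = (MulAut.conj p⁻¹).toMonoidHom.comp μhom := by
      ext y
      obtain ⟨m, q⟩ := y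
      simp [Aof, μof, MulAut.conj]
      group
    calc μhom (A p x) = (μhom.comp (A p)) x := rfl
      _ = (MulAut.conj p⁻¹).toMonoidHom.comp μhom x := by rw [this]
      _ = p⁻¹ * μhom x * p := by simp [MulAut.conj]
  have cm2gen : ∀ x : PresentedGroup R, ∀ (n : Ω) (p : Q),
      (PresentedGroup.of (n, p * μhom x) : PresentedGroup R) =
        x⁻¹ * PresentedGroup.of (n, p) * x := by
    intro x
    refine PresentedGroup.generated_by R
      { carrier := {y | ∀ (n : Ω) (p : Q),
          (PresentedGroup.of (n, p * μhom y) : PresentedGroup R) =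
            y⁻¹ * PresentedGroup.of (n, p) * y}
        one_mem' := by intro n p; simp
        mul_mem' := by
          intro a b ha hb n p
          have h1 := hb n (p * μhom a)
          have h2 := ha n p
          simp only [map_mul, ← mul_assoc] at *
          rw [h1, h2]
          group
        inv_mem' := by
          intro a ha n p
          have h1 := ha n (p * (μhom a)⁻¹)
          rw [mul_assoc, inv_mul_cancel, mul_one] at h1
          rw [map_inv]
          rw [h1]
          group } ?_ x
    intro j
    obtain ⟨m, q⟩ := j
    intro n p
    show (PresentedGroup.of (n, p * μhom (PresentedGroup.of (m, q))) : PresentedGroup R) = _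
    rw [μof]
    have : p * (q⁻¹ * ω m * q) = p * q⁻¹ * ω m * q := by group
    rw [this, key m n p q]
  have hcm2 : ∀ m n : PresentedGroup R, A (μhom m) n = m⁻¹ * n * m := by
    intro m n
    have : A (μhom m) = (MulAut.conj m⁻¹).toMonoidHom := by
      ext y
      obtain ⟨n₀, p⟩ := y
      rw [Aof]
      simp [MulAut.conj]
      have := cm2gen m n₀ p
      rw [this]
    rw [this]
    simp [MulAut.conj]
  refine ⟨⟨μhom, fun x p => A p x, fun m n p => map_mul (A p) m n, Aone, Aact, hcm1, hcm2⟩,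
    fun m q p => Aof p m q, μof, ?_⟩
  intro N _ Z f hf
  -- act in Z as a monoid hom
  have Zact_one : ∀ q, Z.act 1 q = 1 := by
    intro q
    have h := Z.act_mul 1 1 q
    rw [mul_one] at h
    exact right_eq_mul.mp h
  set B : Q → (N →* N) := fun q =>
    { toFun := fun y => Z.act y q
      map_one' := Zact_one q
      map_mul' := fun a b => Z.act_mul a b q } with hB
  have hφrel : ∀ r ∈ R,
      FreeGroup.lift (fun x : Ω × Q => Z.act (f x.1) x.2) r = 1 := by
    intro r hr
    rw [hR] at hr
    obtain ⟨m, n, p, q, rfl⟩ := hr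
    simp only [map_mul, map_inv, FreeGroup.lift_apply_of]
    have hμa : Z.μ (Z.act (f m) q) = q⁻¹ * ω m * q := by rw [Z.cm1, hf]
    have h1 : Z.act (f n) (p * q⁻¹ * ω m * q)
        = (Z.act (f m) q)⁻¹ * Z.act (f n) p * Z.act (f m) q := by
      have : p * q⁻¹ * ω m * q = p * (q⁻¹ * ω m * q) := by group
      rw [this, ← hμa, ← Z.act_act, Z.cm2]
    rw [h1]
    group
  set φ : PresentedGroup R →* N := PresentedGroup.toGroup hφrel with hφ
  have φof : ∀ (m : Ω) (q : Q), φ (PresentedGroup.of (m, q)) = Z.act (f m) q := by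
    intro m q; exact PresentedGroup.toGroup.of hφrel
  refine ⟨φ, ⟨?_, ?_, ?_⟩, ?_⟩
  · intro x
    have : Z.μ.comp φ = μhom := by
      ext y
      obtain ⟨m, q⟩ := y
      show Z.μ (φ (PresentedGroup.of (m, q))) = μhom (PresentedGroup.of (m, q))
      rw [φof, μof, Z.cm1, hf]
    calc Z.μ (φ x) = (Z.μ.comp φ) x := rfl
      _ = μhom x := by rw [this]
  · intro x q
    have : φ.comp (A q) = (B q).comp φ := by
      ext y
      obtain ⟨m, s⟩ := y
      show φ (A q (PresentedGroup.of (m, s))) = Z.act (φ (PresentedGroup.of (m, s))) q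
      rw [Aof, φof, φof, Z.act_act]
    calc φ (A q x) = (φ.comp (A q)) x := rfl
      _ = ((B q).comp φ) x := by rw [this]
      _ = Z.act (φ x) q := rfl
  · intro m
    rw [φof, Z.act_one]
  · intro ψ ⟨h1, h2, h3⟩
    ext y
    obtain ⟨m, q⟩ := y
    have : (PresentedGroup.of (m, q) : PresentedGroup R) = A q (PresentedGroup.of (m, 1)) := by
      rw [Aof, one_mul]
    rw [this]
    have h2' := h2 (PresentedGroup.of (m, 1)) q
    show ψ (A q (PresentedGroup.of (m, 1))) = φ (A q (PresentedGroup.of (m, 1)))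
    rw [h2', h3, Aof, one_mul, φof]
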